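/- Let A be a commutative ring such that every monic polynomial of positive degree with coefficients in A has a root in A. Then for every prime ideal 𝔭 of A, the residue field at 𝔭 (i.e., the fraction field of the integral domain A/𝔭) is algebraically closed. -/

import Mathlib

open Polynomial

/-- If every monic polynomial of positive degree over a commutative ring `A` has a root
in `A`, then the residue field at every prime ideal of `A` (the fraction field of `A ⧸ 𝔭`)
is algebraically closed. -/
theorem isAlgClosed_residueField_of_monic_root
    {A : Type*} [CommRing A]
    (h : ∀ f : Polynomial A, f.Monic → 0 < f.degree → ∃ a : A, f.eval a = 0)
    (𝔭 : Ideal A) [𝔭.IsPrime] :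
    IsAlgClosed (FractionRing (A ⧸ 𝔭)) := by
  set R := A ⧸ 𝔭
  set K := FractionRing R
  apply IsAlgClosed.of_exists_root
  intro p hmonic hirr
  have hdeg : 0 < p.degree := degree_pos_of_irreducible hirr
  -- clear denominators
  obtain ⟨s, hs⟩ := IsLocalization.exist_integer_multiples (nonZeroDivisors R)
    (Finset.range (p.natDegree + 1)) p.coeff
  set c : K := algebraMap R K s with hc
  have hcne : c ≠ 0 := by
    simpa [hc] using
      (map_ne_zero_of_mem_nonZeroDivisors (algebraMap R K)
        (IsFractionRing.injective R K) s.2)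
  set Q : K[X] := p.scaleRoots c with hQ
  have hQmonic : Q.Monic := (monic_scaleRoots_iff c).mpr hmonic
  -- Q lifts to R
  have hQlifts : Q ∈ lifts (algebraMap R K) := by
    rw [lifts_iff_coeff_lifts]
    intro i
    rw [hQ, coeff_scaleRoots]
    rcases lt_or_ge i p.natDegree with hi | hi
    · have h1 : i ∈ Finset.range (p.natDegree + 1) := by
        simp; omega
      obtain ⟨a, ha⟩ := hs i h1
      have : p.natDegree - i = (p.natDegree - i - 1) + 1 := by omega
      rw [this, pow_succ]
      refine ⟨a * s ^ (p.natDegree - i - 1), ?_⟩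
      rw [map_mul, ha, map_pow, Algebra.smul_def]
      ring
    · rcases eq_or_lt_of_le hi with rfl | hi'
      · simp only [Nat.sub_self, pow_zero, mul_one]
        exact ⟨1, by simpa [map_one] using hmonic.coeff_natDegree.symm⟩
      · rw [coeff_eq_zero_of_natDegree_lt hi']
        exact ⟨0, by simp⟩
  obtain ⟨q, hq_map, hq_deg, hq_monic⟩ := lifts_and_degree_eq_and_monic hQlifts hQmonic
  -- q lifts to A
  have hqlifts : q ∈ lifts (Ideal.Quotient.mk 𝔭) := by
    rw [lifts_iff_coeff_lifts]
    intro i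
    exact Ideal.Quotient.mk_surjective (q.coeff i)
  obtain ⟨q', hq'_map, hq'_deg, hq'_monic⟩ := lifts_and_degree_eq_and_monic hqlifts hq_monic
  have hq'_pos : 0 < q'.degree := by
    rw [hq'_deg, hq_deg, hQ, degree_scaleRoots]
    exact hdeg
  obtain ⟨a, ha⟩ := h q' hq'_monic hq'_pos
  -- push the root back up
  have hQroot : Q.eval (algebraMap R K (Ideal.Quotient.mk 𝔭 a)) = 0 := by
    have h1 : q.eval (Ideal.Quotient.mk 𝔭 a) = 0 := by
      rw [← hq'_map, eval_map, eval₂_hom, ha, map_zero]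
    rw [← hq_map, eval_map, eval₂_hom, h1, map_zero]
  set x : K := algebraMap R K (Ideal.Quotient.mk 𝔭 a)
  refine ⟨x / c, ?_⟩
  have key := scaleRoots_eval₂_mul (p := p) (RingHom.id K) (x / c) c
  change eval₂ (RingHom.id K) (c * (x / c)) (p.scaleRoots c) =
    c ^ p.natDegree * eval₂ (RingHom.id K) (x / c) p at key
  rw [mul_div_cancel₀ x hcne] at key
  have : c ^ p.natDegree * p.eval (x / c) = 0 := key.symm.trans hQroot
  rcases mul_eq_zero.mp this with h0 | h0
  · exact absurd h0 (pow_ne_zero _ hcne)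
  · exact h0
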